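/- For every integer n ≥ 1, the simple graph whose vertices are the n-element subsets of {1,…,2n+1} and whose edges join pairs of disjoint subsets admits a matching consisting of exactly ⌊C(2n+1, n)/2⌋ edges, where C denotes the binomial coefficient. -/

import Mathlib

set_option linter.unusedSectionVars false

open Finset

namespace NearMatching

variable {V : Type*} [Fintype V] [DecidableEq V] {G : SimpleGraph V}

/-- A partial matching, represented as a partial involution. -/
def IsPM (G : SimpleGraph V) (f : V → Option V) : Prop :=
  ∀ ⦃v w⦄, f v = some w → G.Adj v w ∧ f w = some v

/-- covered vertices -/
def cov (f : V → Option V) : Finset V :=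
  Finset.univ.filter (fun v => (f v).isSome)

lemma mem_cov {f : V → Option V} {v : V} : v ∈ cov f ↔ (f v).isSome := by
  simp [cov]

lemma isPM_empty : IsPM G (fun _ => none) := by
  intro v w h; simp at h

lemma exists_max : ∃ f, IsPM G f ∧ ∀ g, IsPM G g → (cov g).card ≤ (cov f).card := by
  classical
  obtain ⟨f, hf, hmax⟩ := Finset.exists_max_image
    (Finset.univ.filter (fun f : V → Option V => IsPM G f)) (fun f => (cov f).card)
    ⟨(fun _ => none), by simp [isPM_empty]⟩
  exact ⟨f, by simpa using hf, fun g hg => hmax g (by simpa using hg)⟩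

section Dyn

variable (M M' : V → Option V) (u : V)

/-- the alternating sequence starting at `u`, first step along `M'`. -/
def seq : ℕ → Option V
  | 0 => some u
  | (k+1) => (seq k).bind (fun v => if Even k then M' v else M v)

variable {M M' u}

lemma seq_succ_of_some {k : ℕ} {v : V} (h : seq M M' u k = some v) :
    seq M M' u (k+1) = if Even k then M' v else M v := by
  rw [seq, h]; rfl

lemma seq_none_succ {k : ℕ} (h : seq M M' u k = none) : seq M M' u (k+1) = none := by
  rw [seq, h]; rfl

lemma seq_some_of_succ {k : ℕ} {w : V} (h : seq M M' u (k+1) = some w) :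
    ∃ v, seq M M' u k = some v ∧ (if Even k then M' v else M v) = some w := by
  rcases hk : seq M M' u k with _ | v
  · rw [seq, hk] at h; simp at h
  · exact ⟨v, rfl, by rw [seq, hk] at h; exact h⟩

lemma seq_none_mono {k l : ℕ} (h : seq M M' u k = none) (hkl : k ≤ l) :
    seq M M' u l = none := by
  induction l with
  | zero => rw [show k = 0 from by omega] at h; exact h
  | succ m ihm =>
    rcases Nat.eq_or_lt_of_le hkl with h2 | h2
    · rw [← h2]; exact h
    · exact seq_none_succ (ihm (by omega))

variable (hM : IsPM G M) (hM' : IsPM G M') (hu : M u = none)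

include hM' in
lemma back_even {k : ℕ} {v w : V} (hk : Even k) (h1 : seq M M' u k = some v)
    (h2 : seq M M' u (k+1) = some w) : M' w = some v := by
  rw [seq_succ_of_some h1, if_pos hk] at h2
  exact (hM' h2).2

include hM in
lemma back_odd {k : ℕ} {v w : V} (hk : ¬ Even k) (h1 : seq M M' u k = some v)
    (h2 : seq M M' u (k+1) = some w) : M w = some v := by
  rw [seq_succ_of_some h1, if_neg hk] at h2
  exact (hM h2).2

include hM hM' hu in
lemma inj_same_parity : ∀ s i j x, i + j ≤ s → seq M M' u i = some x →
    seq M M' u j = some x → (Even i ↔ Even j) → i = j := by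
  intro s
  induction s with
  | zero =>
    intro i j x hle _ _ _
    omega
  | succ s ih =>
    intro i j x hle h1 h2 hpar
    match i, j with
    | 0, 0 => rfl
    | 0, (j+1) =>
      exfalso
      have hx : x = u := by rw [seq] at h1; exact (Option.some_inj.mp h1).symm
      obtain ⟨v, hv, hstep⟩ := seq_some_of_succ h2
      have hjodd : ¬ Even j := Nat.even_add_one.mp (hpar.mp Even.zero)
      rw [if_neg hjodd] at hstep
      have := (hM hstep).2
      rw [hx, hu] at this; simp at this
    | (i+1), 0 =>
      exfalso
      have hx : x = u := by rw [seq] at h2; exact (Option.some_inj.mp h2).symm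
      obtain ⟨v, hv, hstep⟩ := seq_some_of_succ h1
      have hiodd : ¬ Even i := Nat.even_add_one.mp (hpar.mpr Even.zero)
      rw [if_neg hiodd] at hstep
      have := (hM hstep).2
      rw [hx, hu] at this; simp at this
    | (i+1), (j+1) =>
      have hpar' : Even i ↔ Even j := by
        rw [Nat.even_add_one, Nat.even_add_one] at hpar; tauto
      obtain ⟨v, hv, _⟩ := seq_some_of_succ h1
      obtain ⟨w, hw, _⟩ := seq_some_of_succ h2
      by_cases hie : Even i
      · have hje : Even j := hpar'.mp hie
        have e1 : M' x = some v := back_even hM' hie hv h1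
        have e2 : M' x = some w := back_even hM' hje hw h2
        have hvw : v = w := by rw [e1] at e2; exact Option.some_inj.mp e2
        subst hvw
        have := ih i j v (by omega) hv hw hpar'
        omega
      · have hje : ¬ Even j := fun h => hie (hpar'.mpr h)
        have e1 : M x = some v := back_odd hM hie hv h1
        have e2 : M x = some w := back_odd hM hje hw h2
        have hvw : v = w := by rw [e1] at e2; exact Option.some_inj.mp e2
        subst hvw
        have := ih i j v (by omega) hv hw hpar'
        omega

include hM hM' hu in
lemma no_mixed : ∀ g i j x, (i + g = j ∨ j + g = i) → Even i → ¬ Even j →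
    seq M M' u i = some x → seq M M' u j = some x → False := by
  intro g
  induction g using Nat.strong_induction_on with
  | _ g ih =>
    intro i j x hg hie hjo h1 h2
    have hi2 := Nat.even_iff.mp hie
    have hj2 := Nat.odd_iff.mp (Nat.not_even_iff_odd.mp hjo)
    by_cases hg0 : g = 0
    · omega
    by_cases hg1 : g = 1
    · rcases hg with hg | hg
      · -- j = i + 1
        have h3 := seq_succ_of_some h1
        rw [if_pos hie, show i + 1 = j from by omega, h2] at h3
        exact (G.loopless.irrefl x) (hM' h3.symm).1
      · -- i = j + 1
        have h3 := seq_succ_of_some h2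
        rw [if_neg hjo, show j + 1 = i from by omega, h1] at h3
        exact (G.loopless.irrefl x) (hM h3.symm).1
    -- g ≥ 2
    rcases hg with hg | hg
    · -- i + g = j, so j ≥ i + 2
      obtain ⟨w, hw, hstep⟩ := seq_some_of_succ (show seq M M' u ((j-1)+1) = some x by
        rw [show j - 1 + 1 = j from by omega]; exact h2)
      rw [if_pos (show Even (j-1) from Nat.even_iff.mpr (by omega))] at hstep
      have hMx : M' x = some w := (hM' hstep).2
      have hnext : seq M M' u (i+1) = some w := by
        rw [seq_succ_of_some h1, if_pos hie, hMx]
      refine ih (g-2) (by omega) (j-1) (i+1) w (Or.inr (by omega))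
        (Nat.even_iff.mpr (by omega)) ?_ hw hnext
      rw [Nat.not_even_iff]; omega
    · -- j + g = i, so i ≥ j + 2
      obtain ⟨w, hw, hstep⟩ := seq_some_of_succ (show seq M M' u ((i-1)+1) = some x by
        rw [show i - 1 + 1 = i from by omega]; exact h1)
      rw [if_neg (show ¬ Even (i-1) from by rw [Nat.not_even_iff]; omega)] at hstep
      have hMx : M x = some w := (hM hstep).2
      have hnext : seq M M' u (j+1) = some w := by
        rw [seq_succ_of_some h2, if_neg hjo, hMx]
      refine ih (g-2) (by omega) (j+1) (i-1) w (Or.inl (by omega))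
        (Nat.even_iff.mpr (by omega)) ?_ hnext hw
      rw [Nat.not_even_iff]; omega

include hM hM' hu in
lemma vertex_inj {i j : ℕ} {x : V} (h1 : seq M M' u i = some x)
    (h2 : seq M M' u j = some x) : i = j := by
  by_cases hie : Even i <;> by_cases hje : Even j
  · exact inj_same_parity hM hM' hu (i+j) i j x le_rfl h1 h2 (by simp [hie, hje])
  · exact (no_mixed hM hM' hu (max (j-i) (i-j)) i j x (by omega) hie hje h1 h2).elim
  · exact (no_mixed hM hM' hu (max (j-i) (i-j)) j i x (by omega) hje hie h2 h1).elim
  · exact inj_same_parity hM hM' hu (i+j) i j x le_rfl h1 h2 (by simp [hie, hje])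

include hM hM' hu in
lemma exists_none : ∃ k, seq M M' u k = none := by
  by_contra hcon
  push_neg at hcon
  have hsome : ∀ k, (seq M M' u k).isSome := fun k => by
    rcases h : seq M M' u k with _ | v
    · exact absurd h (hcon k)
    · rfl
  have hinj : Function.Injective (fun k : Fin (Fintype.card V + 1) =>
      (seq M M' u (k : ℕ)).get (hsome k)) := by
    intro a b hab
    have ha : seq M M' u (a : ℕ) = some ((seq M M' u (a : ℕ)).get (hsome a)) :=
      (Option.some_get _).symm
    have hb : seq M M' u (b : ℕ) = some ((seq M M' u (b : ℕ)).get (hsome b)) :=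
      (Option.some_get _).symm
    simp only at hab
    rw [hab] at ha
    exact Fin.ext (vertex_inj hM hM' hu ha hb)
  have := Fintype.card_le_of_injective _ hinj
  simp at this

end Dyn

section Path

variable {M M' : V → Option V} {u : V}
variable (hM : IsPM G M) (hM' : IsPM G M') (hu : M u = none) (hu' : (M' u).isSome)

/-- the length of the alternating sequence -/
noncomputable def len (hM : IsPM G M) (hM' : IsPM G M') (hu : M u = none) : ℕ :=
  Nat.find (exists_none hM hM' hu)

lemma seq_len : seq M M' u (len hM hM' hu) = none := Nat.find_spec (exists_none hM hM' hu)

lemma seq_isSome_of_lt {k : ℕ} (h : k < len hM hM' hu) : (seq M M' u k).isSome := by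
  have := Nat.find_min (exists_none hM hM' hu) h
  rcases hs : seq M M' u k with _ | v
  · exact absurd hs this
  · rfl

include hu' in
lemma two_le_len : 2 ≤ len hM hM' hu := by
  rcases Nat.lt_or_ge (len hM hM' hu) 2 with h | h
  · exfalso
    interval_cases hl : (len hM hM' hu)
    · have := seq_len hM hM' hu (u := u); rw [hl] at this; simp [seq] at this
    · have := seq_len hM hM' hu (u := u); rw [hl] at this
      rw [show (1:ℕ) = 0 + 1 from rfl, seq_succ_of_some (show seq M M' u 0 = some u from rfl)] at this
      rw [if_pos Even.zero] at this
      rw [this] at hu'; simp at hu'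
  · exact h

/-- the last vertex of the alternating path -/
noncomputable def lastV (hu' : (M' u).isSome) : V :=
  (seq M M' u (len hM hM' hu - 1)).get
    (seq_isSome_of_lt hM hM' hu (by have := two_le_len hM hM' hu hu'; omega))

lemma seq_lastV : seq M M' u (len hM hM' hu - 1) = some (lastV hM hM' hu hu') :=
  (Option.some_get _).symm

/-- the vertex set of the alternating path -/
noncomputable def pathSet (hM : IsPM G M) (hM' : IsPM G M') (hu : M u = none) : Finset V :=
  Finset.univ.filter (fun v => ∃ k < len hM hM' hu, seq M M' u k = some v)

lemma mem_pathSet {v : V} :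
    v ∈ pathSet hM hM' hu ↔ ∃ k < len hM hM' hu, seq M M' u k = some v := by
  classical
  simp [pathSet]

lemma len_pos : 0 < len hM hM' hu := by
  rcases Nat.eq_zero_or_pos (len hM hM' hu) with h | h
  · exfalso
    have h0 := seq_len hM hM' hu (u := u)
    rw [h] at h0
    simp [seq] at h0
  · exact h

lemma u_mem_pathSet : u ∈ pathSet hM hM' hu := by
  rw [mem_pathSet]
  exact ⟨0, len_pos hM hM' hu, rfl⟩

lemma lastV_mem_pathSet : lastV hM hM' hu hu' ∈ pathSet hM hM' hu := by
  rw [mem_pathSet]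
  exact ⟨len hM hM' hu - 1, by have := two_le_len hM hM' hu hu'; omega, seq_lastV hM hM' hu hu'⟩

include hu' in
lemma u_ne_lastV : u ≠ lastV hM hM' hu hu' := by
  intro h
  have h0 : seq M M' u 0 = some (lastV hM hM' hu hu') := by rw [← h]; rfl
  have := vertex_inj hM hM' hu h0 (seq_lastV hM hM' hu hu')
  have := two_le_len hM hM' hu hu'
  omega

/-- closure of the path set under M' -/
lemma pathSet_closed_M' {v y : V} (hv : v ∈ pathSet hM hM' hu) (hy : M' v = some y) :
    y ∈ pathSet hM hM' hu := by
  rw [mem_pathSet] at hv ⊢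
  obtain ⟨k, hk, hkv⟩ := hv
  by_cases hke : Even k
  · -- departure step
    have hs : seq M M' u (k+1) = some y := by rw [seq_succ_of_some hkv, if_pos hke, hy]
    refine ⟨k+1, ?_, hs⟩
    by_contra hcon
    have : seq M M' u (k+1) = none :=
      seq_none_mono (seq_len hM hM' hu) (by omega)
    rw [this] at hs; simp at hs
  · -- arrival step: k ≥ 1, step k-1 even used M'
    have hk1 : k ≠ 0 := by rintro rfl; exact hke Even.zero
    obtain ⟨w, hw, hstep⟩ := seq_some_of_succ (show seq M M' u ((k-1)+1) = some v by
      rw [show k - 1 + 1 = k from by omega]; exact hkv)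
    have hk2 : k % 2 = 1 := Nat.odd_iff.mp (Nat.not_even_iff_odd.mp hke)
    rw [if_pos (show Even (k-1) from Nat.even_iff.mpr (by omega))] at hstep
    have : M' v = some w := (hM' hstep).2
    rw [this] at hy
    exact ⟨k-1, by omega, by rw [Option.some_inj.mp hy] at hw; exact hw⟩

lemma pathSet_closed_M {v y : V} (hv : v ∈ pathSet hM hM' hu) (hy : M v = some y) :
    y ∈ pathSet hM hM' hu := by
  rw [mem_pathSet] at hv ⊢
  obtain ⟨k, hk, hkv⟩ := hv
  by_cases hke : Even k
  · -- arrival step k-1 odd, unless k = 0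
    have hk0 : k ≠ 0 := by
      rintro rfl
      have : v = u := Option.some_inj.mp (by rw [← hkv]; rfl)
      rw [this, hu] at hy; simp at hy
    obtain ⟨w, hw, hstep⟩ := seq_some_of_succ (show seq M M' u ((k-1)+1) = some v by
      rw [show k - 1 + 1 = k from by omega]; exact hkv)
    have hk2 : k % 2 = 0 := Nat.even_iff.mp hke
    rw [if_neg (show ¬ Even (k-1) from by rw [Nat.not_even_iff]; omega)] at hstep
    have : M v = some w := (hM hstep).2
    rw [this] at hy
    exact ⟨k-1, by omega, by rw [Option.some_inj.mp hy] at hw; exact hw⟩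
  · -- departure step
    have hs : seq M M' u (k+1) = some y := by rw [seq_succ_of_some hkv, if_neg hke, hy]
    refine ⟨k+1, ?_, hs⟩
    by_contra hcon
    have : seq M M' u (k+1) = none :=
      seq_none_mono (seq_len hM hM' hu) (by omega)
    rw [this] at hs; simp at hs


include hu' in
/-- the step that terminates the sequence: exposure of the last vertex -/
lemma lastV_exposed :
    (Even (len hM hM' hu - 1) → M' (lastV hM hM' hu hu') = none) ∧
    (¬ Even (len hM hM' hu - 1) → M (lastV hM hM' hu hu') = none) := by
  have h2 := two_le_len hM hM' hu hu'
  have hstep := seq_succ_of_some (seq_lastV hM hM' hu hu')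
  rw [show len hM hM' hu - 1 + 1 = len hM hM' hu from by omega, seq_len hM hM' hu] at hstep
  constructor
  · intro he; rw [if_pos he] at hstep; exact hstep.symm
  · intro he; rw [if_neg he] at hstep; exact hstep.symm

include hu' in
lemma M_isSome_on_path {v : V} (hv : v ∈ pathSet hM hM' hu) (hvu : v ≠ u)
    (hvx : ¬ (¬ Even (len hM hM' hu - 1) ∧ v = lastV hM hM' hu hu')) : (M v).isSome := by
  rw [mem_pathSet] at hv
  obtain ⟨k, hk, hkv⟩ := hv
  by_cases hke : Even k
  · have hk0 : k ≠ 0 := by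
      rintro rfl
      exact hvu (Option.some_inj.mp (by rw [← hkv]; rfl)).symm
    have hk2 : k % 2 = 0 := Nat.even_iff.mp hke
    obtain ⟨w, hw, hstep⟩ := seq_some_of_succ (show seq M M' u ((k-1)+1) = some v by
      rw [show k - 1 + 1 = k from by omega]; exact hkv)
    rw [if_neg (show ¬ Even (k-1) from by rw [Nat.not_even_iff]; omega)] at hstep
    rw [(hM hstep).2]; rfl
  · -- odd k: departure step uses M
    rcases Nat.lt_or_ge (k+1) (len hM hM' hu) with hlt | hge
    · have := seq_isSome_of_lt hM hM' hu hlt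
      rw [seq_succ_of_some hkv, if_neg hke] at this
      exact this
    · -- k = len - 1
      exfalso
      have hkl : k = len hM hM' hu - 1 := by omega
      have hvl : v = lastV hM hM' hu hu' := by
        have := seq_lastV hM hM' hu hu'
        rw [← hkl] at this
        rw [hkv] at this
        exact Option.some_inj.mp this
      exact hvx ⟨by rw [← hkl]; exact hke, hvl⟩

include hu' in
lemma M'_isSome_on_path {v : V} (hv : v ∈ pathSet hM hM' hu)
    (hvx : ¬ (Even (len hM hM' hu - 1) ∧ v = lastV hM hM' hu hu')) : (M' v).isSome := by
  rw [mem_pathSet] at hv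
  obtain ⟨k, hk, hkv⟩ := hv
  by_cases hke : Even k
  · rcases Nat.lt_or_ge (k+1) (len hM hM' hu) with hlt | hge
    · have := seq_isSome_of_lt hM hM' hu hlt
      rw [seq_succ_of_some hkv, if_pos hke] at this
      exact this
    · exfalso
      have hkl : k = len hM hM' hu - 1 := by omega
      have hvl : v = lastV hM hM' hu hu' := by
        have := seq_lastV hM hM' hu hu'
        rw [← hkl, hkv] at this
        exact Option.some_inj.mp this
      exact hvx ⟨by rw [← hkl]; exact hke, hvl⟩
  · have hk2 : k % 2 = 1 := Nat.odd_iff.mp (Nat.not_even_iff_odd.mp hke)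
    obtain ⟨w, hw, hstep⟩ := seq_some_of_succ (show seq M M' u ((k-1)+1) = some v by
      rw [show k - 1 + 1 = k from by omega]; exact hkv)
    rw [if_pos (show Even (k-1) from Nat.even_iff.mpr (by omega))] at hstep
    rw [(hM' hstep).2]; rfl

end Path

section Toggle

variable {M M' : V → Option V}

/-- toggling a matching along a closed set -/
def tog (P : Finset V) (M M' : V → Option V) : V → Option V :=
  fun v => if v ∈ P then M' v else M v

lemma tog_isPM (hM : IsPM G M) (hM' : IsPM G M') {P : Finset V}
    (h1 : ∀ v y, v ∈ P → M' v = some y → y ∈ P)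
    (h2 : ∀ v y, v ∈ P → M v = some y → y ∈ P) :
    IsPM G (tog P M M') := by
  intro v w h
  unfold tog at h ⊢
  by_cases hv : v ∈ P
  · rw [if_pos hv] at h
    have hw : w ∈ P := h1 v w hv h
    exact ⟨(hM' h).1, by rw [if_pos hw]; exact (hM' h).2⟩
  · rw [if_neg hv] at h
    have hw : w ∉ P := by
      intro hw
      exact hv (h2 w v hw (hM h).2)
    exact ⟨(hM h).1, by rw [if_neg hw]; exact (hM h).2⟩

lemma cov_tog (P : Finset V) :
    cov (tog P M M') = ((cov M') ∩ P) ∪ ((cov M) \ P) := by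
  ext v
  by_cases hv : v ∈ P <;> simp [mem_cov, tog, hv]

lemma card_cov_tog (P : Finset V) :
    (cov (tog P M M')).card = ((cov M') ∩ P).card + ((cov M) \ P).card := by
  rw [cov_tog]
  apply Finset.card_union_of_disjoint
  exact Finset.disjoint_left.mpr (fun a ha hb => (Finset.mem_sdiff.mp hb).2 (Finset.mem_inter.mp ha).2)

lemma card_split (s P : Finset V) : s.card = (s ∩ P).card + (s \ P).card :=
  (Finset.card_inter_add_card_sdiff s P).symm

end Toggle

section Main

variable (G)

/-- maximum partial matchings -/
def IsMaxPM (f : V → Option V) : Prop :=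
  IsPM G f ∧ ∀ g, IsPM G g → (cov g).card ≤ (cov f).card

variable {G}

lemma IsMaxPM.not_adj_exposed {f : V → Option V} (hf : IsMaxPM G f) {a b : V}
    (ha : f a = none) (hb : f b = none) (hab : G.Adj a b) : False := by
  classical
  have hne : a ≠ b := hab.ne
  set g : V → Option V := fun v => if v = a then some b else if v = b then some a else f v with hgdef
  have hg : IsPM G g := by
    intro v w h
    simp only [hgdef] at h
    by_cases hva : v = a
    · rw [if_pos hva] at h
      have hwb : w = b := (Option.some_inj.mp h).symm
      subst hva; subst hwb
      exact ⟨hab, by simp [hgdef, hne.symm]⟩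
    · rw [if_neg hva] at h
      by_cases hvb : v = b
      · rw [if_pos hvb] at h
        have hwa : w = a := (Option.some_inj.mp h).symm
        subst hvb; subst hwa
        exact ⟨hab.symm, by simp [hgdef]⟩
      · rw [if_neg hvb] at h
        have h2 := hf.1 h
        have hwa : w ≠ a := by
          rintro rfl
          rw [ha] at h2; simp at h2
        have hwb : w ≠ b := by
          rintro rfl
          rw [hb] at h2; simp at h2
        exact ⟨h2.1, by simp [hgdef, hwa, hwb, h2.2]⟩
  have hcov : cov g = insert a (insert b (cov f)) := by
    ext v
    simp only [mem_cov, Finset.mem_insert, hgdef]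
    by_cases hva : v = a
    · simp [hva]
    · by_cases hvb : v = b
      · simp [hvb, hne.symm]
      · simp [hva, hvb]
  have hanotin : a ∉ insert b (cov f) := by
    simp [mem_cov, hne, ha]
  have hbnotin : b ∉ cov f := by simp [mem_cov, hb]
  have hcard : (cov g).card = (cov f).card + 2 := by
    rw [hcov, Finset.card_insert_of_notMem hanotin, Finset.card_insert_of_notMem hbnotin]
  have := hf.2 g hg
  omega

/-- transport of a matching along a graph isomorphism -/
def mapPM (e : G ≃g G) (f : V → Option V) : V → Option V :=
  fun v => (f (e.symm v)).map e

lemma mapPM_isPM {e : G ≃g G} {f : V → Option V} (hf : IsPM G f) : IsPM G (mapPM e f) := by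
  intro v w h
  simp only [mapPM, Option.map_eq_some_iff] at h
  obtain ⟨y, hy, hyw⟩ := h
  have h2 := hf hy
  constructor
  · have : G.Adj (e (e.symm v)) (e y) := e.map_rel_iff.mpr h2.1
    rwa [e.apply_symm_apply, hyw] at this
  · simp only [mapPM]
    have hsy : e.symm w = y := by rw [← hyw]; exact e.symm_apply_apply y
    rw [hsy, h2.2]
    simp [Option.map_some]

lemma cov_mapPM (e : G ≃g G) (f : V → Option V) :
    cov (mapPM e f) = (cov f).image e := by
  ext v
  simp only [mem_cov, mapPM, Option.isSome_map, Finset.mem_image]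
  constructor
  · intro h
    exact ⟨e.symm v, h, e.apply_symm_apply v⟩
  · rintro ⟨y, hy, rfl⟩
    rw [e.symm_apply_apply]
    exact hy

lemma card_cov_mapPM (e : G ≃g G) (f : V → Option V) :
    (cov (mapPM e f)).card = (cov f).card := by
  rw [cov_mapPM]
  exact Finset.card_image_of_injective _ e.injective

lemma IsMaxPM.mapPM {e : G ≃g G} {f : V → Option V} (hf : IsMaxPM G f) :
    IsMaxPM G (NearMatching.mapPM e f) := by
  refine ⟨mapPM_isPM hf.1, fun g hg => ?_⟩
  rw [card_cov_mapPM]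
  have := hf.2 (NearMatching.mapPM e.symm g) (mapPM_isPM hg)
  rwa [card_cov_mapPM] at this

lemma mapPM_exposed {e : G ≃g G} {f : V → Option V} {a : V} (ha : f a = none) :
    mapPM e f (e a) = none := by
  simp only [mapPM]
  rw [show e.symm (e a) = a from e.symm_apply_apply a, ha]
  rfl

lemma exists_mid (hconn : G.Connected) {a b : V} (h2 : 2 ≤ G.dist a b) :
    ∃ t, G.Adj a t ∧ G.dist t b < G.dist a b ∧ t ≠ b := by
  obtain ⟨p, hp⟩ := SimpleGraph.exists_walk_of_dist_ne_zero (by omega : G.dist a b ≠ 0)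
  cases p with
  | nil => rw [SimpleGraph.Walk.length_nil] at hp; omega
  | cons hadj q =>
    rename_i t
    rw [SimpleGraph.Walk.length_cons] at hp
    refine ⟨t, hadj, ?_, ?_⟩
    · have := SimpleGraph.dist_le q
      omega
    · rintro rfl
      have : G.dist a t ≤ 1 := by
        have := SimpleGraph.dist_le (SimpleGraph.Walk.cons hadj SimpleGraph.Walk.nil)
        simpa using this
      omega

theorem exists_near_perfect (hconn : G.Connected)
    (htrans : ∀ a b : V, ∃ e : G ≃g G, e a = b) :
    ∃ f, IsPM G f ∧ (Finset.univ.filter (fun v => f v = none)).card ≤ 1 := by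
  classical
  obtain ⟨f0, hf0, hmax0⟩ := exists_max (G := G)
  by_cases hle : (Finset.univ.filter (fun v => f0 v = none)).card ≤ 1
  · exact ⟨f0, hf0, hle⟩
  exfalso
  rw [not_le] at hle
  obtain ⟨a, hamem, b, hbmem, hab⟩ := Finset.one_lt_card.mp hle
  simp only [Finset.mem_filter] at hamem hbmem
  set D : Set ℕ := {d | ∃ g, IsMaxPM G g ∧ ∃ x y, x ≠ y ∧ g x = none ∧ g y = none ∧
    G.dist x y = d} with hD
  have hDne : D.Nonempty := ⟨G.dist a b, f0, ⟨hf0, hmax0⟩, a, b, hab, hamem.2, hbmem.2, rfl⟩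
  obtain ⟨g, hgmax, uu, ww, hneq, hgu, hgw, hdist⟩ := Nat.sInf_mem hDne
  have hd2 : 2 ≤ sInf D := by
    rcases Nat.lt_or_ge (sInf D) 2 with h | h
    · exfalso
      interval_cases hsd : (sInf D)
      · exact hneq ((hconn.dist_eq_zero_iff).mp hdist)
      · exact hgmax.not_adj_exposed hgu hgw (SimpleGraph.dist_eq_one_iff_adj.mp hdist)
    · exact h
  obtain ⟨t, hat, hdt, htw⟩ := exists_mid hconn (by omega : 2 ≤ G.dist uu ww)
  by_cases hgt : g t = none
  · -- (t, ww) is a closer exposed pair for g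
    have hmem : G.dist t ww ∈ D := ⟨g, hgmax, t, ww, htw, hgt, hgw, rfl⟩
    have := Nat.sInf_le hmem
    omega
  -- transport to get a maximum matching exposing t
  obtain ⟨e, he⟩ := htrans uu t
  set g' := mapPM e g with hg'def
  have hg'max : IsMaxPM G g' := hgmax.mapPM
  have hg't : g' t = none := by rw [← he]; exact mapPM_exposed hgu
  have hg'u : (g' uu).isSome := by
    rcases hh : g' uu with _ | v
    · exact (hg'max.not_adj_exposed hh hg't hat).elim
    · rfl
  -- run the alternating path dynamics
  have hM : IsPM G g := hgmax.1
  have hM' : IsPM G g' := hg'max.1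
  set L := len hM hM' hgu with hLdef
  set x := lastV hM hM' hgu hg'u with hxdef
  set P := pathSet hM hM' hgu with hPdef
  have hclM' : ∀ v y, v ∈ P → g' v = some y → y ∈ P :=
    fun v y hv hy => pathSet_closed_M' hM hM' hgu hv hy
  have hclM : ∀ v y, v ∈ P → g v = some y → y ∈ P :=
    fun v y hv hy => pathSet_closed_M hM hM' hgu hv hy
  have huP : uu ∈ P := u_mem_pathSet hM hM' hgu
  have hxP : x ∈ P := lastV_mem_pathSet hM hM' hgu hg'u
  have hux : uu ≠ x := u_ne_lastV hM hM' hgu hg'u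
  by_cases hE : Even (L - 1)
  · -- last vertex is g'-exposed
    have hwP : ww ∉ P := by
      intro hmem
      have := M_isSome_on_path hM hM' hgu hg'u hmem hneq.symm (fun h => h.1 hE)
      rw [hgw] at this; simp at this
    have hx' : g' x = none := (lastV_exposed hM hM' hgu hg'u).1 hE
    -- key card computations
    have hcovg'P : cov g' ∩ P = P.erase x := by
      ext v
      simp only [Finset.mem_inter, Finset.mem_erase, mem_cov]
      constructor
      · rintro ⟨h1, h2⟩
        refine ⟨?_, h2⟩
        rintro rfl
        rw [hx'] at h1; simp at h1
      · rintro ⟨h1, h2⟩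
        exact ⟨M'_isSome_on_path hM hM' hgu hg'u h2 (fun h => h1 h.2), h2⟩
    have hcovgP : cov g ∩ P = P.erase uu := by
      ext v
      simp only [Finset.mem_inter, Finset.mem_erase, mem_cov]
      constructor
      · rintro ⟨h1, h2⟩
        refine ⟨?_, h2⟩
        rintro rfl
        rw [hgu] at h1; simp at h1
      · rintro ⟨h1, h2⟩
        exact ⟨M_isSome_on_path hM hM' hgu hg'u h2 h1 (fun h => h.1 hE), h2⟩
    by_cases hxt : x = t
    · -- toggle g along P; get max matching exposing t and ww
      set h := tog P g g' with hhdef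
      have hhPM : IsPM G h := tog_isPM hM hM' hclM' hclM
      have hhcard : (cov h).card = (cov g).card := by
        rw [card_cov_tog, hcovg'P, card_split (cov g) P, hcovgP,
          Finset.card_erase_of_mem hxP, Finset.card_erase_of_mem huP]
      have hhmax : IsMaxPM G h := ⟨hhPM, fun g2 hg2 => hhcard ▸ hgmax.2 g2 hg2⟩
      have hht : h x = none := by
        simp only [hhdef, tog, if_pos hxP]; exact hx'
      have hhw : h ww = none := by
        simp only [hhdef, tog, if_neg hwP]; exact hgw
      have hmem : G.dist x ww ∈ D := ⟨h, hhmax, x, ww, by rw [hxt]; exact htw, hht, hhw, rfl⟩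
      have := Nat.sInf_le hmem
      rw [hxt] at *
      omega
    · -- toggle g' along P; get max matching exposing uu and t, adjacent!
      set h := tog P g' g with hhdef
      have hhPM : IsPM G h := tog_isPM hM' hM hclM hclM'
      have hhcard : (cov h).card = (cov g').card := by
        rw [card_cov_tog, hcovgP, card_split (cov g') P, hcovg'P,
          Finset.card_erase_of_mem hxP, Finset.card_erase_of_mem huP]
      have hhmax : IsMaxPM G h := ⟨hhPM, fun g2 hg2 => hhcard ▸ hg'max.2 g2 hg2⟩
      have hhu : h uu = none := by
        simp only [hhdef, tog, if_pos huP]; exact hgu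
      have htP : t ∉ P := by
        intro hmem
        have := M'_isSome_on_path hM hM' hgu hg'u hmem (fun hh => hxt hh.2.symm)
        rw [hg't] at this; simp at this
      have hht : h t = none := by
        simp only [hhdef, tog, if_neg htP]; exact hg't
      exact hhmax.not_adj_exposed hhu hht hat
  · -- augmenting path: contradiction with maximality of g
    have hx : g x = none := (lastV_exposed hM hM' hgu hg'u).2 hE
    have hcovg'P : cov g' ∩ P = P := by
      ext v
      simp only [Finset.mem_inter, mem_cov]
      constructor
      · rintro ⟨_, h2⟩; exact h2
      · intro h2
        exact ⟨M'_isSome_on_path hM hM' hgu hg'u h2 (fun h => hE h.1), h2⟩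
    have hcovgP : cov g ∩ P = (P.erase uu).erase x := by
      ext v
      simp only [Finset.mem_inter, Finset.mem_erase, mem_cov]
      constructor
      · rintro ⟨h1, h2⟩
        refine ⟨?_, ?_, h2⟩
        · rintro rfl; rw [hx] at h1; simp at h1
        · rintro rfl; rw [hgu] at h1; simp at h1
      · rintro ⟨h1, h2, h3⟩
        exact ⟨M_isSome_on_path hM hM' hgu hg'u h3 h2 (fun h => h1 h.2), h3⟩
    set h := tog P g g' with hhdef
    have hhPM : IsPM G h := tog_isPM hM hM' hclM' hclM
    have hhcard : (cov h).card = (cov g).card + 2 := by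
      rw [card_cov_tog, hcovg'P, card_split (cov g) P, hcovgP,
        Finset.card_erase_of_mem (Finset.mem_erase.mpr ⟨(Ne.symm hux), hxP⟩),
        Finset.card_erase_of_mem huP]
      have hPcard : 2 ≤ P.card := by
        have : ({uu, x} : Finset V) ⊆ P := by
          intro v hv
          rcases Finset.mem_insert.mp hv with rfl | hv
          · exact huP
          · rw [Finset.mem_singleton.mp hv]; exact hxP
        have := Finset.card_le_card this
        rwa [Finset.card_insert_of_notMem (by simpa using hux), Finset.card_singleton] at this
      omega
    have := hgmax.2 h hhPM
    omega

end Main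

end NearMatching

/-- The odd graph `O_n` (a Kneser graph): vertices are the `n`-element subsets of
`{1, …, 2n+1}`, two of them being adjacent iff they are disjoint. -/
def oddGraph (n : ℕ) : SimpleGraph {s : Finset (Fin (2 * n + 1)) // s.card = n} where
  Adj a b := a ≠ b ∧ Disjoint a.1 b.1
  symm := by
    constructor
    intro a b h
    exact ⟨h.1.symm, h.2.symm⟩
  loopless := by
    constructor
    intro a h
    exact h.1 rfl

namespace OddGraphFacts

open Finset

variable {n : ℕ}

abbrev OV (n : ℕ) := {s : Finset (Fin (2 * n + 1)) // s.card = n}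

lemma oddGraph_adj {a b : OV n} : (oddGraph n).Adj a b ↔ a ≠ b ∧ Disjoint a.1 b.1 := Iff.rfl

lemma card_fin_odd : Fintype.card (Fin (2 * n + 1)) = 2 * n + 1 := Fintype.card_fin _

lemma oddGraph_reach (hn : 1 ≤ n) :
    ∀ k (a b : OV n), (b.1 \ a.1).card = k → (oddGraph n).Reachable a b := by
  intro k
  induction k with
  | zero =>
    intro a b h
    have hsub : b.1 ⊆ a.1 := by
      intro x hx
      by_contra hcon
      have : x ∈ b.1 \ a.1 := Finset.mem_sdiff.mpr ⟨hx, hcon⟩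
      rw [Finset.card_eq_zero.mp h] at this
      simp at this
    have : a = b := Subtype.ext
      (Finset.eq_of_subset_of_card_le hsub (by rw [a.2, b.2])).symm
    rw [this]
  | succ k ih =>
    intro a b h
    obtain ⟨α, hα⟩ := Finset.card_pos.mp (show 0 < (b.1 \ a.1).card by omega)
    have hαb : α ∈ b.1 := (Finset.mem_sdiff.mp hα).1
    have hαa : α ∉ a.1 := (Finset.mem_sdiff.mp hα).2
    have hab_card : (a.1 \ b.1).card = k + 1 := by
      rw [Finset.card_sdiff_comm (a.2.trans b.2.symm)]
      exact h
    obtain ⟨β, hβ⟩ := Finset.card_pos.mp (show 0 < (a.1 \ b.1).card by omega)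
    have hβa : β ∈ a.1 := (Finset.mem_sdiff.mp hβ).1
    have hβb : β ∉ b.1 := (Finset.mem_sdiff.mp hβ).2
    have hαβ : α ≠ β := fun hh => hαa (hh ▸ hβa)
    set a' : Finset (Fin (2*n+1)) := insert α (a.1.erase β) with ha'def
    have hαnotin : α ∉ a.1.erase β := fun hh => hαa (Finset.mem_of_mem_erase hh)
    have ha'card : a'.card = n := by
      rw [ha'def, Finset.card_insert_of_notMem hαnotin, Finset.card_erase_of_mem hβa, a.2]
      omega
    have hinscard : (insert α a.1).card = n + 1 := by
      rw [Finset.card_insert_of_notMem hαa, a.2]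
    set R : Finset (Fin (2*n+1)) := (insert α a.1)ᶜ with hRdef
    have hRcard : R.card = n := by
      rw [hRdef, Finset.card_compl, hinscard, card_fin_odd]
      omega
    set A' : OV n := ⟨a', ha'card⟩
    set Rv : OV n := ⟨R, hRcard⟩
    have ha'sub : a' ⊆ insert α a.1 := by
      intro x hx
      rcases Finset.mem_insert.mp hx with rfl | hx
      · exact Finset.mem_insert_self _ _
      · exact Finset.mem_insert_of_mem (Finset.mem_of_mem_erase hx)
    have hdisj1 : Disjoint a.1 R := by
      rw [Finset.disjoint_left]
      intro x hx hxR
      rw [hRdef, Finset.mem_compl] at hxR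
      exact hxR (Finset.mem_insert_of_mem hx)
    have hdisj2 : Disjoint R a' := by
      rw [Finset.disjoint_left]
      intro x hx hxa'
      rw [hRdef, Finset.mem_compl] at hx
      exact hx (ha'sub hxa')
    have hane : a ≠ Rv := by
      intro hh
      have hda : Disjoint a.1 a.1 := by nth_rewrite 2 [hh]; exact hdisj1
      rw [disjoint_self] at hda
      have h2 := a.2
      rw [hda] at h2
      simp at h2
      omega
    have hane2 : Rv ≠ A' := by
      intro hh
      have hval : R = a' := congrArg Subtype.val hh
      have hda : Disjoint a' a' := by nth_rewrite 1 [← hval]; exact hdisj2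
      rw [disjoint_self] at hda
      rw [hda] at ha'card
      simp at ha'card
      omega
    have hadj1 : (oddGraph n).Adj a Rv := ⟨hane, hdisj1⟩
    have hadj2 : (oddGraph n).Adj Rv A' := ⟨hane2, hdisj2⟩
    have hstep : (b.1 \ a').card = k := by
      have hset : b.1 \ a' = (b.1 \ a.1).erase α := by
        ext x
        simp only [Finset.mem_sdiff, Finset.mem_erase, ha'def, Finset.mem_insert,
          Finset.mem_erase]
        constructor
        · rintro ⟨hxb, hxna⟩
          refine ⟨fun hh => hxna (Or.inl hh), hxb, fun hxa => hxna
            (Or.inr ⟨fun hhb => hβb (hhb ▸ hxb), hxa⟩)⟩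
        · rintro ⟨hxα, hxb, hxna⟩
          refine ⟨hxb, ?_⟩
          rintro (rfl | ⟨-, hxa'⟩)
          · exact hxα rfl
          · exact hxna hxa'
      rw [hset, Finset.card_erase_of_mem hα, h]
      omega
    exact (hadj1.reachable.trans hadj2.reachable).trans (ih A' b hstep)

lemma oddGraph_connected (hn : 1 ≤ n) : (oddGraph n).Connected := by
  rw [SimpleGraph.connected_iff]
  constructor
  · intro a b
    exact oddGraph_reach hn _ a b rfl
  · obtain ⟨t, _, ht⟩ := Finset.exists_subset_card_eq (show n ≤ (Finset.univ : Finset (Fin (2*n+1))).card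
      from by rw [Finset.card_univ, card_fin_odd]; omega)
    exact ⟨⟨t, ht⟩⟩

lemma oddGraph_trans (a b : OV n) : ∃ e : (oddGraph n) ≃g (oddGraph n), e a = b := by
  classical
  have hcards : a.1.card = b.1.card := a.2.trans b.2.symm
  have hcc : a.1ᶜ.card = b.1ᶜ.card := by
    rw [Finset.card_compl, Finset.card_compl, hcards]
  set e1 : {x // x ∈ a.1} ≃ {x // x ∈ b.1} := Finset.equivOfCardEq hcards with he1
  set e2' : {x // x ∈ a.1ᶜ} ≃ {x // x ∈ b.1ᶜ} := Finset.equivOfCardEq hcc with he2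
  set e2 : {x // ¬ x ∈ a.1} ≃ {x // ¬ x ∈ b.1} :=
    ((Equiv.subtypeEquivRight (fun x => (Finset.mem_compl (s := a.1)).symm)).trans e2').trans
      (Equiv.subtypeEquivRight (fun x => Finset.mem_compl (s := b.1))) with he2def
  set π : Fin (2*n+1) ≃ Fin (2*n+1) :=
    ((Equiv.sumCompl (· ∈ a.1)).symm.trans ((Equiv.sumCongr e1 e2).trans
      (Equiv.sumCompl (· ∈ b.1)))) with hπ
  have hπa : ∀ x (hx : x ∈ a.1), π x ∈ b.1 := by
    intro x hx
    rw [hπ]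
    simp only [Equiv.trans_apply]
    rw [Equiv.sumCompl_symm_apply_of_pos (p := (· ∈ a.1)) hx]
    simp only [Equiv.sumCongr_apply, Sum.map_inl, Equiv.sumCompl_apply_inl]
    exact (e1 ⟨x, hx⟩).2
  set F : OV n ≃ OV n := (π.finsetCongr).subtypeEquiv (fun s => by
    rw [Equiv.finsetCongr_apply, Finset.card_map]) with hF
  have hFval : ∀ s : OV n, (F s).1 = s.1.map π.toEmbedding := fun s => rfl
  refine ⟨⟨F, ?_⟩, ?_⟩
  · intro s t
    constructor
    · rintro ⟨hne, hdisj⟩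
      refine ⟨fun hh => hne (by rw [hh]), ?_⟩
      rw [hFval, hFval] at hdisj
      rwa [Finset.disjoint_map] at hdisj
    · rintro ⟨hne, hdisj⟩
      refine ⟨fun hh => hne (F.injective hh), ?_⟩
      rw [hFval, hFval, Finset.disjoint_map]
      exact hdisj
  · apply Subtype.ext
    show (F a).1 = b.1
    rw [hFval]
    apply Finset.eq_of_subset_of_card_le
    · intro y hy
      obtain ⟨x, hx, rfl⟩ := Finset.mem_map.mp hy
      exact hπa x hx
    · rw [Finset.card_map, a.2, b.2]

end OddGraphFacts

open NearMatching OddGraphFacts in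
theorem oddGraph_exists_large_matching (n : ℕ) (hn : 1 ≤ n) :
    ∃ M : (oddGraph n).Subgraph, M.IsMatching ∧
      M.edgeSet.ncard = (2 * n + 1).choose n / 2 := by
  classical
  obtain ⟨f, hf, hexp⟩ :=
    NearMatching.exists_near_perfect (oddGraph_connected hn) oddGraph_trans
  set pf : OV n → OV n := fun v => (f v).getD v with hpfdef
  have hpf_some : ∀ v ∈ cov f, f v = some (pf v) := by
    intro v hv
    rw [mem_cov] at hv
    rcases hfv : f v with _ | w
    · rw [hfv] at hv; simp at hv
    · simp [hpfdef, hfv]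
  have hadj : ∀ v ∈ cov f, (oddGraph n).Adj v (pf v) := fun v hv => (hf (hpf_some v hv)).1
  have hinv : ∀ v ∈ cov f, f (pf v) = some v := fun v hv => (hf (hpf_some v hv)).2
  have hpf_mem : ∀ v ∈ cov f, pf v ∈ cov f := by
    intro v hv
    rw [mem_cov, hinv v hv]; rfl
  have hpfpf : ∀ v ∈ cov f, pf (pf v) = v := by
    intro v hv
    show (f (pf v)).getD (pf v) = v
    rw [hinv v hv]; rfl
  set E : Finset (Sym2 (OV n)) := (cov f).image (fun v => s(v, pf v)) with hEdef
  have hfiber : ∀ b ∈ E, ((cov f).filter (fun a => s(a, pf a) = b)).card = 2 := by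
    intro b hb
    obtain ⟨v0, hv0, rfl⟩ := Finset.mem_image.mp hb
    have hset : (cov f).filter (fun a => s(a, pf a) = s(v0, pf v0)) = {v0, pf v0} := by
      ext a
      simp only [Finset.mem_filter, Finset.mem_insert, Finset.mem_singleton]
      constructor
      · rintro ⟨ha, heq⟩
        rw [Sym2.eq_iff] at heq
        rcases heq with ⟨rfl, -⟩ | ⟨h1, -⟩
        · exact Or.inl rfl
        · exact Or.inr h1
      · rintro (rfl | rfl)
        · exact ⟨hv0, rfl⟩
        · refine ⟨hpf_mem v0 hv0, ?_⟩
          rw [hpfpf v0 hv0]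
          exact Sym2.eq_swap
    rw [hset, Finset.card_insert_of_notMem (by
      simp only [Finset.mem_singleton]
      exact (hadj v0 hv0).ne), Finset.card_singleton]
  have hcard2 : (cov f).card = 2 * E.card := by
    rw [Finset.card_eq_sum_card_image (fun v => s(v, pf v)) (cov f)]
    rw [Finset.sum_congr rfl hfiber, Finset.sum_const, smul_eq_mul]
    rw [hEdef]
    ring
  set M : (oddGraph n).Subgraph :=
    { verts := ↑(cov f)
      Adj := fun v w => f v = some w
      adj_sub := fun h => (hf h).1
      edge_vert := fun {v w} h => by
        rw [Finset.mem_coe, mem_cov, h]; rfl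
      symm := ⟨fun v w h => (hf h).2⟩ } with hMdef
  have hmatch : M.IsMatching := by
    intro v hv
    rw [hMdef] at hv
    rw [Finset.mem_coe] at hv
    refine ⟨pf v, hpf_some v hv, ?_⟩
    intro y hy
    have : f v = some y := hy
    rw [hpf_some v hv] at this
    exact (Option.some_inj.mp this).symm
  have hedge : M.edgeSet = ↑E := by
    ext e
    induction e with
    | _ x y =>
      rw [SimpleGraph.Subgraph.mem_edgeSet]
      simp only [Finset.coe_image, Set.mem_image, Finset.mem_coe, hEdef]
      constructor
      · intro hAdj
        have hx : x ∈ cov f := by rw [mem_cov, show f x = some y from hAdj]; rfl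
        refine ⟨x, hx, ?_⟩
        have : pf x = y := by
          have := hpf_some x hx
          rw [show f x = some y from hAdj] at this
          exact (Option.some_inj.mp this).symm
        rw [this]
      · rintro ⟨v, hv, heq⟩
        rw [Sym2.eq_iff] at heq
        rcases heq with ⟨rfl, rfl⟩ | ⟨h1, h2⟩
        · exact hpf_some v hv
        · show f x = some y
          subst h1; subst h2
          exact hinv v hv
  refine ⟨M, hmatch, ?_⟩
  rw [hedge, Set.ncard_coe_finset]
  have hN : Fintype.card (OV n) = (2 * n + 1).choose n := by
    rw [Fintype.card_finset_len, card_fin_odd]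
  have hcovcompl : Finset.univ.filter (fun v => ¬ (f v = none)) = cov f := by
    ext v
    simp [mem_cov, Option.isSome_iff_ne_none]
  have hsplit := Finset.card_filter_add_card_filter_not
    (s := (Finset.univ : Finset (OV n))) (p := fun v => f v = none)
  rw [hcovcompl, Finset.card_univ, hN] at hsplit
  set A := #(Finset.filter (fun v => f v = none) Finset.univ) with hA
  omega
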